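/- arXiv:1912.04429 — 2 statements merged into one kernel-verified Lean document; each statement's English description precedes it below -/
import Mathlib

section
/- Normal component of the curl in the adapted orthonormal frame: Let f : ℝ² → ℝ be C² in the variables (x₂,x₃), and define the frame (N, T², T³) as functions of (x₂,x₃) by the explicit formulas below. Then for every C¹ vector field ũ : ℝ³ → ℝ³ and every x ∈ ℝ³: (curl ũ)(x) · N(x₂,x₃) = Σ_{j=1}^{3} [ T²_j ∂_j(ũ·T³)(x) − T³_j ∂_j(ũ·T²)(x) ] − Σ_{ν=2}^{3} [ T²_ν (ũ(x)·∂_ν T³(x₂,x₃)) − T³_ν (ũ(x)·∂_ν T²(x₂,x₃)) ], where (curl ũ)ᵢ = ε_{ijk}∂ⱼũ_k, (ũ·T^ν)(x) = ũ(x)·T^ν(x₂,x₃), and ∂_j = ∂_{x_j}. -/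
noncomputable section

/-- Points of physical space `ℝ³`. -/
abbrev V3 : Type := Fin 3 → ℝ

/-- Spatial partial derivative `∂ⱼ g` of a scalar function on `ℝ³`. -/
def pdS (j : Fin 3) (g : V3 → ℝ) (x : V3) : ℝ :=
  fderiv ℝ g x (Pi.single j 1 : V3)

/-- The curl of a vector field on `ℝ³`: `(curl u)ᵢ = ε_{ijk} ∂ⱼ u_k`. -/
def curlS (u : V3 → V3) (x : V3) : V3 :=
  ![pdS 1 (fun y => u y 2) x - pdS 2 (fun y => u y 1) x,
    pdS 2 (fun y => u y 0) x - pdS 0 (fun y => u y 2) x,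
    pdS 0 (fun y => u y 1) x - pdS 1 (fun y => u y 0) x]

/-- `∂₂ f`, the partial derivative of `f(x₂,x₃)` in its first argument. -/
def f2 (f : ℝ × ℝ → ℝ) (q : ℝ × ℝ) : ℝ := fderiv ℝ f q (1, 0)

/-- `∂₃ f`, the partial derivative of `f(x₂,x₃)` in its second argument. -/
def f3 (f : ℝ × ℝ → ℝ) (q : ℝ × ℝ) : ℝ := fderiv ℝ f q (0, 1)

/-- `J = (1 + (∂₂f)² + (∂₃f)²)^{1/2}`. -/
def Jf (f : ℝ × ℝ → ℝ) (q : ℝ × ℝ) : ℝ :=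
  Real.sqrt (1 + f2 f q ^ 2 + f3 f q ^ 2)

/-- The unit normal `N = J⁻¹(1, −∂₂f, −∂₃f)` of the graph of `f`. -/
def Nf (f : ℝ × ℝ → ℝ) (q : ℝ × ℝ) : V3 :=
  (Jf f q)⁻¹ • ![1, -f2 f q, -f3 f q]

/-- The unit tangent vector `T²`. -/
def T2f (f : ℝ × ℝ → ℝ) (q : ℝ × ℝ) : V3 :=
  ![f2 f q / Jf f q,
    1 - f2 f q ^ 2 / (Jf f q * (Jf f q + 1)),
    -(f2 f q * f3 f q) / (Jf f q * (Jf f q + 1))]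

/-- The unit tangent vector `T³`. -/
def T3f (f : ℝ × ℝ → ℝ) (q : ℝ × ℝ) : V3 :=
  ![f3 f q / Jf f q,
    -(f2 f q * f3 f q) / (Jf f q * (Jf f q + 1)),
    1 - f3 f q ^ 2 / (Jf f q * (Jf f q + 1))]

def projL : V3 →L[ℝ] ℝ × ℝ :=
  (ContinuousLinearMap.proj 1).prod (ContinuousLinearMap.proj 2)

lemma hasFDerivAt_proj (x : V3) :
    HasFDerivAt (fun y : V3 => ((y 1, y 2) : ℝ × ℝ)) projL x :=
  projL.hasFDerivAt

lemma pdS_comp (g : ℝ × ℝ → ℝ) (x : V3) (hg : DifferentiableAt ℝ g (x 1, x 2)) (j : Fin 3) :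
    pdS j (fun y => g (y 1, y 2)) x
      = fderiv ℝ g (x 1, x 2) ((Pi.single j 1 : V3) 1, (Pi.single j 1 : V3) 2) := by
  have h : HasFDerivAt (fun y : V3 => g (y 1, y 2))
      ((fderiv ℝ g (x 1, x 2)).comp projL) x :=
    (hg.hasFDerivAt).comp x (hasFDerivAt_proj x)
  unfold pdS
  rw [h.fderiv]
  rfl

lemma pdS_sum_mul (u : V3 → V3) (T : ℝ × ℝ → V3) (x : V3)
    (hu : ∀ i, DifferentiableAt ℝ (fun y => u y i) x)
    (hT : ∀ i, DifferentiableAt ℝ (fun p => T p i) (x 1, x 2)) (j : Fin 3) :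
    pdS j (fun y => ∑ i : Fin 3, u y i * T (y 1, y 2) i) x
      = ∑ i : Fin 3, (pdS j (fun y => u y i) x * T (x 1, x 2) i
          + u x i * fderiv ℝ (fun p => T p i) (x 1, x 2)
              ((Pi.single j 1 : V3) 1, (Pi.single j 1 : V3) 2)) := by
  have h : ∀ i : Fin 3, HasFDerivAt (fun y => u y i * T (y 1, y 2) i)
      (u x i • ((fderiv ℝ (fun p => T p i) (x 1, x 2)).comp projL)
        + T (x 1, x 2) i • fderiv ℝ (fun y => u y i) x) x := by
    intro i
    have hc := ((hT i).hasFDerivAt).comp x (hasFDerivAt_proj x)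
    exact ((hu i).hasFDerivAt).mul hc
  have hsum := HasFDerivAt.fun_sum (u := (Finset.univ : Finset (Fin 3))) (fun i _ => h i)
  unfold pdS
  rw [hsum.fderiv]
  simp only [ContinuousLinearMap.coe_sum', Finset.sum_apply, ContinuousLinearMap.add_apply,
    ContinuousLinearMap.coe_smul', Pi.smul_apply, ContinuousLinearMap.coe_comp', Function.comp,
    smul_eq_mul]
  refine Finset.sum_congr rfl fun i _ => ?_
  have : projL (Pi.single j 1) = ((Pi.single j 1 : V3) 1, (Pi.single j 1 : V3) 2) := rfl
  rw [this]
  ring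

section facts
variable (f : ℝ × ℝ → ℝ)

lemma hf2 (hf : ContDiff ℝ 2 f) : ContDiff ℝ 1 (f2 f) := by
  unfold f2
  exact (hf.fderiv_right (by norm_num)).clm_apply contDiff_const

lemma hf3 (hf : ContDiff ℝ 2 f) : ContDiff ℝ 1 (f3 f) := by
  unfold f3
  exact (hf.fderiv_right (by norm_num)).clm_apply contDiff_const

lemma one_le_Jf (q : ℝ × ℝ) : 1 ≤ Jf f q := by
  have h0 : (0:ℝ) ≤ 1 + f2 f q ^ 2 + f3 f q ^ 2 := by positivity
  have := Real.sq_sqrt h0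
  have h1 := Real.sqrt_nonneg (1 + f2 f q ^ 2 + f3 f q ^ 2)
  unfold Jf
  nlinarith [sq_nonneg (f2 f q), sq_nonneg (f3 f q)]

lemma Jf_ne (q : ℝ × ℝ) : Jf f q ≠ 0 := by
  have := one_le_Jf f q; linarith

lemma Jf_sq (q : ℝ × ℝ) : Jf f q ^ 2 = 1 + f2 f q ^ 2 + f3 f q ^ 2 := by
  unfold Jf; exact Real.sq_sqrt (by positivity)

lemma hJf (hf : ContDiff ℝ 2 f) : ContDiff ℝ 1 (Jf f) := by
  unfold Jf
  refine ContDiff.sqrt ?_ ?_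
  · exact (contDiff_const.add ((hf2 f hf).pow 2)).add ((hf3 f hf).pow 2)
  · intro q; positivity

lemma hT2d (hf : ContDiff ℝ 2 f) (i : Fin 3) (q : ℝ × ℝ) : DifferentiableAt ℝ (fun p => T2f f p i) q := by
  have ha := ((hf2 f hf).differentiable one_ne_zero)
  have hb := ((hf3 f hf).differentiable one_ne_zero)
  have hJ := ((hJf f hf).differentiable one_ne_zero)
  have hJne : ∀ p, Jf f p ≠ 0 := Jf_ne f
  have hD : ∀ p : ℝ × ℝ, Jf f p * (Jf f p + 1) ≠ 0 := by
    intro p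
    have := one_le_Jf f p
    positivity
  have hDi : Differentiable ℝ fun p : ℝ × ℝ => (Jf f p * (Jf f p + 1))⁻¹ :=
    (hJ.mul (hJ.add_const 1)).inv hD
  have hJi : Differentiable ℝ fun p : ℝ × ℝ => (Jf f p)⁻¹ := hJ.inv hJne
  fin_cases i <;> simp only [T2f, Matrix.cons_val_zero, Matrix.cons_val_one, Matrix.head_cons,
    Matrix.cons_val_two, Matrix.tail_cons, Fin.isValue, div_eq_mul_inv]
  · exact (ha.mul hJi).differentiableAt
  · exact ((differentiable_const _).sub ((ha.pow 2).mul hDi)).differentiableAt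
  · exact ((ha.mul hb).neg.mul hDi).differentiableAt

lemma hT3d (hf : ContDiff ℝ 2 f) (i : Fin 3) (q : ℝ × ℝ) : DifferentiableAt ℝ (fun p => T3f f p i) q := by
  have ha := ((hf2 f hf).differentiable one_ne_zero)
  have hb := ((hf3 f hf).differentiable one_ne_zero)
  have hJ := ((hJf f hf).differentiable one_ne_zero)
  have hJne : ∀ p, Jf f p ≠ 0 := Jf_ne f
  have hD : ∀ p : ℝ × ℝ, Jf f p * (Jf f p + 1) ≠ 0 := by
    intro p
    have := one_le_Jf f p
    positivity
  have hDi : Differentiable ℝ fun p : ℝ × ℝ => (Jf f p * (Jf f p + 1))⁻¹ :=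
    (hJ.mul (hJ.add_const 1)).inv hD
  have hJi : Differentiable ℝ fun p : ℝ × ℝ => (Jf f p)⁻¹ := hJ.inv hJne
  fin_cases i <;> simp only [T3f, Matrix.cons_val_zero, Matrix.cons_val_one, Matrix.head_cons,
    Matrix.cons_val_two, Matrix.tail_cons, Fin.isValue, div_eq_mul_inv]
  · exact (hb.mul hJi).differentiableAt
  · exact ((ha.mul hb).neg.mul hDi).differentiableAt
  · exact ((differentiable_const _).sub ((hb.pow 2).mul hDi)).differentiableAt
end facts


/-- Normal component of the curl in the adapted orthonormal frame `(N, T², T³)`: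
`curl ũ · N = T²ⱼ∂ⱼ(ũ·T³) − T³ⱼ∂ⱼ(ũ·T²) − Σ_ν [T²_ν(ũ·∂_νT³) − T³_ν(ũ·∂_νT²)]`. -/
theorem curl_normal_component_in_adapted_frame
    (f : ℝ × ℝ → ℝ) (hf : ContDiff ℝ 2 f)
    (u : V3 → V3) (hu : ContDiff ℝ 1 u)
    (x : V3) :
    (∑ i : Fin 3, curlS u x i * Nf f (x 1, x 2) i) =
      (∑ j : Fin 3,
        (T2f f (x 1, x 2) j * pdS j (fun y => ∑ i : Fin 3, u y i * T3f f (y 1, y 2) i) x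
          - T3f f (x 1, x 2) j * pdS j (fun y => ∑ i : Fin 3, u y i * T2f f (y 1, y 2) i) x))
      - ((T2f f (x 1, x 2) 1 * (∑ i : Fin 3, u x i * pdS 1 (fun y => T3f f (y 1, y 2) i) x)
            + T2f f (x 1, x 2) 2 * (∑ i : Fin 3, u x i * pdS 2 (fun y => T3f f (y 1, y 2) i) x))
          - (T3f f (x 1, x 2) 1 * (∑ i : Fin 3, u x i * pdS 1 (fun y => T2f f (y 1, y 2) i) x)
            + T3f f (x 1, x 2) 2 * (∑ i : Fin 3, u x i * pdS 2 (fun y => T2f f (y 1, y 2) i) x))) := by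
  have hud : ∀ i, DifferentiableAt ℝ (fun y => u y i) x :=
    fun i => (differentiableAt_pi.1 (hu.differentiable one_ne_zero x)) i
  have h2d : ∀ i, DifferentiableAt ℝ (fun p => T2f f p i) (x 1, x 2) :=
    fun i => hT2d f hf i _
  have h3d : ∀ i, DifferentiableAt ℝ (fun p => T3f f p i) (x 1, x 2) :=
    fun i => hT3d f hf i _
  have e2 : ∀ (i j : Fin 3), pdS j (fun y => T2f f (y 1, y 2) i) x
      = fderiv ℝ (fun p => T2f f p i) (x 1, x 2)
          ((Pi.single j 1 : V3) 1, (Pi.single j 1 : V3) 2) :=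
    fun i j => pdS_comp _ x (h2d i) j
  have e3 : ∀ (i j : Fin 3), pdS j (fun y => T3f f (y 1, y 2) i) x
      = fderiv ℝ (fun p => T3f f p i) (x 1, x 2)
          ((Pi.single j 1 : V3) 1, (Pi.single j 1 : V3) 2) :=
    fun i j => pdS_comp _ x (h3d i) j
  simp only [pdS_sum_mul u (T2f f) x hud h2d, pdS_sum_mul u (T3f f) x hud h3d, e2, e3]
  simp only [Fin.sum_univ_three]
  norm_num [Pi.single_apply, Prod.mk_zero_zero, map_zero]
  simp only [curlS, Nf, T2f, T3f, Matrix.cons_val_zero, Matrix.cons_val_one, Matrix.head_cons,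
    Matrix.cons_val_two, Matrix.tail_cons, Pi.smul_apply, smul_eq_mul, Fin.isValue]
  simp only [Pi.single_apply, Fin.reduceEq, reduceIte, Prod.mk_zero_zero, map_zero,
    mul_zero, add_zero]
  have hs := Jf_sq f (x 1, x 2)
  have h1 := one_le_Jf f (x 1, x 2)
  generalize (fderiv ℝ (fun p => f2 f p / Jf f p) (x 1, x 2)) ((1:ℝ), (0:ℝ)) = dA1
  generalize (fderiv ℝ (fun p => f2 f p / Jf f p) (x 1, x 2)) ((0:ℝ), (1:ℝ)) = dA2
  generalize (fderiv ℝ (fun p => f3 f p / Jf f p) (x 1, x 2)) ((1:ℝ), (0:ℝ)) = dB1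
  generalize (fderiv ℝ (fun p => f3 f p / Jf f p) (x 1, x 2)) ((0:ℝ), (1:ℝ)) = dB2
  generalize (fderiv ℝ (fun p => 1 - f2 f p ^ 2 / (Jf f p * (Jf f p + 1))) (x 1, x 2)) ((1:ℝ), (0:ℝ)) = dC1
  generalize (fderiv ℝ (fun p => 1 - f2 f p ^ 2 / (Jf f p * (Jf f p + 1))) (x 1, x 2)) ((0:ℝ), (1:ℝ)) = dC2
  generalize (fderiv ℝ (fun p => 1 - f3 f p ^ 2 / (Jf f p * (Jf f p + 1))) (x 1, x 2)) ((1:ℝ), (0:ℝ)) = dD1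
  generalize (fderiv ℝ (fun p => 1 - f3 f p ^ 2 / (Jf f p * (Jf f p + 1))) (x 1, x 2)) ((0:ℝ), (1:ℝ)) = dD2
  generalize (fderiv ℝ (fun p => -(f2 f p * f3 f p) / (Jf f p * (Jf f p + 1))) (x 1, x 2)) ((1:ℝ), (0:ℝ)) = dE1
  generalize (fderiv ℝ (fun p => -(f2 f p * f3 f p) / (Jf f p * (Jf f p + 1))) (x 1, x 2)) ((0:ℝ), (1:ℝ)) = dE2
  generalize u x 0 = u0
  generalize u x 1 = u1
  generalize u x 2 = u2
  generalize pdS 0 (fun y => u y 0) x = p00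
  generalize pdS 0 (fun y => u y 1) x = p01
  generalize pdS 0 (fun y => u y 2) x = p02
  generalize pdS 1 (fun y => u y 0) x = p10
  generalize pdS 1 (fun y => u y 1) x = p11
  generalize pdS 1 (fun y => u y 2) x = p12
  generalize pdS 2 (fun y => u y 0) x = p20
  generalize pdS 2 (fun y => u y 1) x = p21
  generalize pdS 2 (fun y => u y 2) x = p22
  set a := f2 f (x 1, x 2) with ha
  set b := f3 f (x 1, x 2) with hb
  set s := Jf f (x 1, x 2) with hsd
  have hs0 : s ≠ 0 := by linarith
  have hs1 : s + 1 ≠ 0 := by linarith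
  have hkey : (1 - a ^ 2 / (s * (s + 1))) * (1 - b ^ 2 / (s * (s + 1)))
      - -(a * b) / (s * (s + 1)) * (-(a * b) / (s * (s + 1))) = 1 / s := by
    have h2 : a ^ 2 + b ^ 2 = s ^ 2 - 1 := by linarith
    field_simp
    linear_combination (-(s * (s + 1))) * h2
  linear_combination (p21 - p12) * hkey
end
end

section
/- Uniform integral bound along escaping trajectories (the analytic core of Lemma 7.3 of the paper): Let 0 ≤ σ₁ < 1/2 and σ₂ > 2σ₁. Then there exists a constant C = C(σ₁, σ₂), depending only on σ₁ and σ₂, such that for every ε ∈ (0,1] and every s* ∈ ℝ: ∫_{−log ε}^{∞} e^{σ₁ s} [ (1 + |e^{s/2} − e^{s*/2}|)^{−σ₂} + (1 + e^{s/2})^{−σ₂} ] ds ≤ C. Equivalently (after the substitution r = e^{s/2}), for every a ≥ 0: ∫_{1}^{∞} r^{2σ₁ − 1} (1 + |r − a|)^{−σ₂} dr ≤ C. -/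
noncomputable section

open MeasureTheory Real Set
open scoped ENNReal

namespace EscapeAux

lemma ptwise {σ₁ σ₂ : ℝ} (h1 : 0 ≤ σ₁) (h2 : σ₁ < 1 / 2) (h3 : 2 * σ₁ < σ₂) {r : ℝ} (a : ℝ) (hr : 1 ≤ r) :
    r ^ (2 * σ₁ - 1) * (1 + |r - a|) ^ (-σ₂) ≤
      2 ^ σ₂ * r ^ (-(1 + (σ₂ - 2 * σ₁))) +
        2 ^ (2 * σ₁) * (1 + |r - a|) ^ (-(1 + (σ₂ - 2 * σ₁))) := by
  have hr0 : (0:ℝ) < r := lt_of_lt_of_le one_pos hr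
  have hu0 : (0:ℝ) < 1 + |r - a| := by positivity
  have hσ₂ : 0 < σ₂ := lt_of_le_of_lt (by positivity) h3
  have hA : (0:ℝ) ≤ 2 ^ σ₂ * r ^ (-(1 + (σ₂ - 2 * σ₁))) := by positivity
  have hB : (0:ℝ) ≤ 2 ^ (2*σ₁) * (1 + |r - a|) ^ (-(1 + (σ₂ - 2 * σ₁))) := by positivity
  rcases le_or_gt r (2 * (1 + |r - a|)) with hc | hc
  · have h1u : r / 2 ≤ 1 + |r - a| := by linarith
    have hle : (1 + |r - a|) ^ (-σ₂) ≤ (r / 2) ^ (-σ₂) :=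
      Real.rpow_le_rpow_of_nonpos (by positivity) h1u (by linarith)
    have heq : r ^ (2*σ₁-1) * (r/2) ^ (-σ₂) = 2 ^ σ₂ * r ^ (-(1 + (σ₂ - 2 * σ₁))) := by
      rw [div_eq_mul_inv, Real.mul_rpow hr0.le (by norm_num),
        Real.inv_rpow (by norm_num : (0:ℝ) ≤ 2), ← Real.rpow_neg (by norm_num : (0:ℝ) ≤ 2),
        neg_neg, ← mul_assoc, ← Real.rpow_add hr0]
      ring_nf
    calc r ^ (2*σ₁-1) * (1+|r-a|) ^ (-σ₂)
        ≤ r ^ (2*σ₁-1) * (r/2) ^ (-σ₂) :=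
          mul_le_mul_of_nonneg_left hle (Real.rpow_nonneg hr0.le _)
      _ = 2 ^ σ₂ * r ^ (-(1 + (σ₂ - 2 * σ₁))) := heq
      _ ≤ _ := le_add_of_nonneg_right hB
  · have hle : r ^ (2*σ₁-1) ≤ (2 * (1 + |r - a|)) ^ (2*σ₁-1) :=
      Real.rpow_le_rpow_of_nonpos (by positivity) hc.le (by linarith)
    have heq : (2 * (1 + |r - a|)) ^ (2*σ₁-1) * (1+|r-a|) ^ (-σ₂)
        = 2 ^ (2*σ₁-1) * (1 + |r - a|) ^ (-(1 + (σ₂ - 2 * σ₁))) := by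
      rw [Real.mul_rpow (by norm_num) hu0.le, mul_assoc, ← Real.rpow_add hu0]
      ring_nf
    have h2le : (2:ℝ) ^ (2*σ₁-1) ≤ 2 ^ (2*σ₁) :=
      Real.rpow_le_rpow_of_exponent_le one_le_two (by linarith)
    calc r ^ (2*σ₁-1) * (1+|r-a|) ^ (-σ₂)
        ≤ (2 * (1 + |r - a|)) ^ (2*σ₁-1) * (1+|r-a|) ^ (-σ₂) :=
          mul_le_mul_of_nonneg_right hle (Real.rpow_nonneg hu0.le _)
      _ = 2 ^ (2*σ₁-1) * (1 + |r - a|) ^ (-(1 + (σ₂ - 2 * σ₁))) := heq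
      _ ≤ 2 ^ (2*σ₁) * (1 + |r - a|) ^ (-(1 + (σ₂ - 2 * σ₁))) :=
          mul_le_mul_of_nonneg_right h2le (Real.rpow_nonneg hu0.le _)
      _ ≤ _ := le_add_of_nonneg_left hA

end EscapeAux

namespace EscapeAux

def Bconst (σ₁ σ₂ : ℝ) : ℝ :=
  2 ^ σ₂ * (∫ r in Ioi (1:ℝ), r ^ (-(1 + (σ₂ - 2 * σ₁)))) +
    2 ^ (2 * σ₁) * (∫ x : ℝ, (1 + |x|) ^ (-(1 + (σ₂ - 2 * σ₁))))

lemma Bconst_nonneg (σ₁ σ₂ : ℝ) : 0 ≤ Bconst σ₁ σ₂ := by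
  have hK : 0 ≤ ∫ r in Ioi (1:ℝ), r ^ (-(1 + (σ₂ - 2 * σ₁))) :=
    setIntegral_nonneg measurableSet_Ioi fun r hr =>
      Real.rpow_nonneg (le_of_lt (lt_trans one_pos hr)) _
  have hJ : 0 ≤ ∫ x : ℝ, (1 + |x|) ^ (-(1 + (σ₂ - 2 * σ₁))) :=
    integral_nonneg fun x => Real.rpow_nonneg (by positivity) _
  have : (0:ℝ) ≤ 2 ^ σ₂ := by positivity
  have : (0:ℝ) ≤ 2 ^ (2*σ₁) := by positivity
  unfold Bconst; positivity

lemma key {σ₁ σ₂ : ℝ} (h1 : 0 ≤ σ₁) (h2 : σ₁ < 1 / 2) (h3 : 2 * σ₁ < σ₂) (a : ℝ) :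
    (∫⁻ r in Ioi (1:ℝ), ENNReal.ofReal (r ^ (2 * σ₁ - 1) * (1 + |r - a|) ^ (-σ₂))) ≤
      ENNReal.ofReal (Bconst σ₁ σ₂) := by
  set δ : ℝ := σ₂ - 2 * σ₁ with hδdef
  have hδ : 0 < δ := by simp only [hδdef]; linarith
  have hlt : -(1 + δ) < -1 := by linarith
  -- measurability of bound pieces
  have m1 : Measurable fun r : ℝ => ENNReal.ofReal (2 ^ σ₂ * r ^ (-(1 + δ))) :=
    (measurable_const.mul ((measurable_id.pow_const _))).ennreal_ofReal
  have m2 : Measurable fun r : ℝ => ENNReal.ofReal (2 ^ (2*σ₁) * (1 + |r - a|) ^ (-(1 + δ))) := by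
    have hc : Continuous fun r : ℝ => (1 + |r - a|) ^ (-(1 + δ)) := by
      apply Continuous.rpow_const (by continuity)
      intro x; left; positivity
    exact (measurable_const.mul hc.measurable).ennreal_ofReal
  have step1 : (∫⁻ r in Ioi (1:ℝ), ENNReal.ofReal (r ^ (2 * σ₁ - 1) * (1 + |r - a|) ^ (-σ₂))) ≤
      ∫⁻ r in Ioi (1:ℝ), (ENNReal.ofReal (2 ^ σ₂ * r ^ (-(1 + δ))) +
        ENNReal.ofReal (2 ^ (2*σ₁) * (1 + |r - a|) ^ (-(1 + δ)))) := by
    refine setLIntegral_mono (m1.add m2) fun r hr => ?_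
    have := ptwise h1 h2 h3 a (le_of_lt hr)
    calc ENNReal.ofReal (r ^ (2 * σ₁ - 1) * (1 + |r - a|) ^ (-σ₂))
        ≤ ENNReal.ofReal (2 ^ σ₂ * r ^ (-(1 + δ)) + 2 ^ (2*σ₁) * (1 + |r - a|) ^ (-(1 + δ))) :=
          ENNReal.ofReal_le_ofReal this
      _ ≤ _ := ENNReal.ofReal_add_le
  have e1 : (∫⁻ r in Ioi (1:ℝ), ENNReal.ofReal (2 ^ σ₂ * r ^ (-(1 + δ)))) =
      ENNReal.ofReal (2 ^ σ₂ * ∫ r in Ioi (1:ℝ), r ^ (-(1 + δ))) := by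
    rw [← integral_const_mul]
    refine (ofReal_integral_eq_lintegral_ofReal ?_ ?_).symm
    · exact (integrableOn_Ioi_rpow_of_lt hlt one_pos).const_mul _
    · filter_upwards [ae_restrict_mem measurableSet_Ioi] with r hr
      have : (0:ℝ) < r := lt_trans one_pos hr
      positivity
  have e2 : (∫⁻ r in Ioi (1:ℝ), ENNReal.ofReal (2 ^ (2*σ₁) * (1 + |r - a|) ^ (-(1 + δ)))) ≤
      ENNReal.ofReal (2 ^ (2*σ₁) * ∫ x : ℝ, (1 + |x|) ^ (-(1 + δ))) := by
    calc (∫⁻ r in Ioi (1:ℝ), ENNReal.ofReal (2 ^ (2*σ₁) * (1 + |r - a|) ^ (-(1 + δ))))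
        ≤ ∫⁻ r : ℝ, ENNReal.ofReal (2 ^ (2*σ₁) * (1 + |r - a|) ^ (-(1 + δ))) :=
          setLIntegral_le_lintegral _ _
      _ = ∫⁻ x : ℝ, ENNReal.ofReal (2 ^ (2*σ₁) * (1 + |x|) ^ (-(1 + δ))) := by
          simp only [sub_eq_add_neg]
          exact lintegral_add_right_eq_self
            (fun x : ℝ => ENNReal.ofReal (2 ^ (2*σ₁) * (1 + |x|) ^ (-(1 + δ)))) (-a)
      _ = ENNReal.ofReal (2 ^ (2*σ₁) * ∫ x : ℝ, (1 + |x|) ^ (-(1 + δ))) := by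
          rw [← integral_const_mul]
          refine (ofReal_integral_eq_lintegral_ofReal ?_ ?_).symm
          · refine Integrable.const_mul ?_ _
            have := integrable_one_add_norm (E := ℝ) (μ := volume) (r := 1 + δ) (by simp; linarith)
            simpa [Real.norm_eq_abs] using this
          · filter_upwards with x
            positivity
  calc (∫⁻ r in Ioi (1:ℝ), ENNReal.ofReal (r ^ (2 * σ₁ - 1) * (1 + |r - a|) ^ (-σ₂)))
      ≤ _ := step1
    _ = (∫⁻ r in Ioi (1:ℝ), ENNReal.ofReal (2 ^ σ₂ * r ^ (-(1 + δ)))) +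
        ∫⁻ r in Ioi (1:ℝ), ENNReal.ofReal (2 ^ (2*σ₁) * (1 + |r - a|) ^ (-(1 + δ))) :=
        lintegral_add_left m1 _
    _ ≤ ENNReal.ofReal (2 ^ σ₂ * ∫ r in Ioi (1:ℝ), r ^ (-(1 + δ))) +
        ENNReal.ofReal (2 ^ (2*σ₁) * ∫ x : ℝ, (1 + |x|) ^ (-(1 + δ))) := by
        rw [e1]; exact add_le_add le_rfl e2
    _ ≤ ENNReal.ofReal (Bconst σ₁ σ₂) := by
        rw [← ENNReal.ofReal_add, Bconst]
        · have hK : 0 ≤ ∫ r in Ioi (1:ℝ), r ^ (-(1 + δ)) :=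
            setIntegral_nonneg measurableSet_Ioi fun r hr =>
              Real.rpow_nonneg (le_of_lt (lt_trans one_pos hr)) _
          positivity
        · have hJ : 0 ≤ ∫ x : ℝ, (1 + |x|) ^ (-(1 + δ)) :=
            integral_nonneg fun x => Real.rpow_nonneg (by positivity) _
          positivity

end EscapeAux

namespace EscapeAux

lemma cov {σ₁ σ₂ : ℝ} (h1 : 0 ≤ σ₁) (h2 : σ₁ < 1 / 2) (h3 : 2 * σ₁ < σ₂)
    (b L : ℝ) (hL : 0 ≤ L) :
    (∫⁻ s in Ioi L, ENNReal.ofReal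
        (Real.exp (σ₁ * s) * (1 + |Real.exp (s / 2) - b|) ^ (-σ₂))) ≤
      ENNReal.ofReal (2 * Bconst σ₁ σ₂) := by
  set f : ℝ → ℝ := fun s => Real.exp (s / 2) with hf
  set g : ℝ → ℝ≥0∞ := fun r =>
    ENNReal.ofReal (2 * (r ^ (2 * σ₁ - 1) * (1 + |r - b|) ^ (-σ₂))) with hg
  have hf' : ∀ x ∈ Ioi L, HasDerivWithinAt f (Real.exp (x / 2) * (1 / 2)) (Ioi L) x := by
    intro x _
    exact ((Real.hasDerivAt_exp (x / 2)).comp x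
      ((hasDerivAt_id x).div_const 2)).hasDerivWithinAt
  have hfd : ∀ x ∈ Ioi L, HasFDerivWithinAt f
      ((1 : ℝ →L[ℝ] ℝ).smulRight (Real.exp (x / 2) * (1 / 2))) (Ioi L) x :=
    fun x hx => (hf' x hx).hasFDerivWithinAt
  have hinj : InjOn f (Ioi L) := by
    intro x _ y _ hxy
    have := Real.exp_injective hxy
    linarith
  have himg : f '' Ioi L = Ioi (Real.exp (L / 2)) := by
    ext y
    simp only [mem_image, mem_Ioi]
    constructor
    · rintro ⟨x, hx, rfl⟩
      exact Real.exp_lt_exp.2 (by linarith)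
    · intro hy
      have hy0 : 0 < y := lt_trans (Real.exp_pos _) hy
      refine ⟨2 * Real.log y, ?_, ?_⟩
      · have hlog : L / 2 < Real.log y := (Real.lt_log_iff_exp_lt hy0).mpr hy
        show L < 2 * Real.log y
        linarith
      · show Real.exp (2 * Real.log y / 2) = y
        rw [show (2:ℝ) * Real.log y / 2 = Real.log y by ring, Real.exp_log hy0]
  have hcov := lintegral_image_eq_lintegral_abs_det_fderiv_mul volume
    measurableSet_Ioi hfd hinj g
  rw [himg] at hcov
  have hrw : ∀ x ∈ Ioi L,
      ENNReal.ofReal |((1 : ℝ →L[ℝ] ℝ).smulRight (Real.exp (x / 2) * (1 / 2))).det| * g (f x)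
        = ENNReal.ofReal (Real.exp (σ₁ * x) * (1 + |Real.exp (x / 2) - b|) ^ (-σ₂)) := by
    intro x _
    have hdet : ((1 : ℝ →L[ℝ] ℝ).smulRight (Real.exp (x / 2) * (1 / 2))).det
        = Real.exp (x / 2) * (1 / 2) := by
      exact ContinuousLinearMap.det_toSpanSingleton _
    rw [hdet, abs_of_pos (by positivity), hg, ← ENNReal.ofReal_mul (by positivity)]
    congr 1
    have hrpow : (Real.exp (x / 2)) ^ (2 * σ₁ - 1)
        = Real.exp (x / 2 * (2 * σ₁ - 1)) := by
      rw [Real.rpow_def_of_pos (Real.exp_pos _), Real.log_exp]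
    rw [hf]
    simp only [hrpow]
    rw [show Real.exp (x / 2) * (1 / 2) *
        (2 * (Real.exp (x / 2 * (2 * σ₁ - 1)) * (1 + |Real.exp (x / 2) - b|) ^ (-σ₂)))
      = (Real.exp (x / 2) * Real.exp (x / 2 * (2 * σ₁ - 1))) *
        (1 + |Real.exp (x / 2) - b|) ^ (-σ₂) by ring]
    rw [← Real.exp_add]
    congr 2
    ring
  calc (∫⁻ s in Ioi L, ENNReal.ofReal
        (Real.exp (σ₁ * s) * (1 + |Real.exp (s / 2) - b|) ^ (-σ₂)))
      = ∫⁻ x in Ioi L,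
          ENNReal.ofReal |((1 : ℝ →L[ℝ] ℝ).smulRight (Real.exp (x / 2) * (1 / 2))).det| *
            g (f x) := by
        refine (setLIntegral_congr_fun measurableSet_Ioi (fun x hx => ?_)).symm
        exact hrw x hx
    _ = ∫⁻ r in Ioi (Real.exp (L / 2)), g r := hcov.symm
    _ ≤ ∫⁻ r in Ioi (1:ℝ), g r := by
        refine lintegral_mono_set ?_
        refine Ioi_subset_Ioi ?_
        exact Real.one_le_exp (by positivity)
    _ = ENNReal.ofReal 2 * ∫⁻ r in Ioi (1:ℝ),
          ENNReal.ofReal (r ^ (2 * σ₁ - 1) * (1 + |r - b|) ^ (-σ₂)) := by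
        rw [← lintegral_const_mul' _ _ ENNReal.ofReal_ne_top]
        refine setLIntegral_congr_fun measurableSet_Ioi (fun r _ => ?_)
        simp only [hg]
        rw [ENNReal.ofReal_mul (by norm_num : (0:ℝ) ≤ 2)]
    _ ≤ ENNReal.ofReal 2 * ENNReal.ofReal (Bconst σ₁ σ₂) :=
        mul_le_mul_right (key h1 h2 h3 b) _
    _ = ENNReal.ofReal (2 * Bconst σ₁ σ₂) :=
        (ENNReal.ofReal_mul (by norm_num)).symm

end EscapeAux


/-- Uniform integral bound along escaping trajectories (the analytic core of Lemma 7.3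
of the paper): for `0 ≤ σ₁ < 1/2` and `σ₂ > 2σ₁` there is a constant `C = C(σ₁,σ₂)`,
uniform in `ε ∈ (0,1]` and `s* ∈ ℝ` (respectively in `a ≥ 0`), bounding
`∫_{−log ε}^∞ e^{σ₁ s}[(1+|e^{s/2}−e^{s*/2}|)^{−σ₂} + (1+e^{s/2})^{−σ₂}] ds` and,
equivalently, `∫_1^∞ r^{2σ₁−1}(1+|r−a|)^{−σ₂} dr`. -/
theorem escaping_trajectory_integral_bound
    (σ₁ σ₂ : ℝ) (h1 : 0 ≤ σ₁) (h2 : σ₁ < 1 / 2) (h3 : 2 * σ₁ < σ₂) :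
    ∃ C : ℝ,
      (∀ ε : ℝ, 0 < ε → ε ≤ 1 → ∀ sstar : ℝ,
        (∫⁻ s in Set.Ioi (-Real.log ε),
            ENNReal.ofReal (Real.exp (σ₁ * s) *
              ((1 + |Real.exp (s / 2) - Real.exp (sstar / 2)|) ^ (-σ₂)
                + (1 + Real.exp (s / 2)) ^ (-σ₂)))) ≤ ENNReal.ofReal C) ∧
      (∀ a : ℝ, 0 ≤ a →
        (∫⁻ r in Set.Ioi (1 : ℝ),
            ENNReal.ofReal (r ^ (2 * σ₁ - 1) * (1 + |r - a|) ^ (-σ₂))) ≤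
          ENNReal.ofReal C) := by
  have hBnn := EscapeAux.Bconst_nonneg σ₁ σ₂
  refine ⟨4 * EscapeAux.Bconst σ₁ σ₂, ?_, ?_⟩
  · intro ε hε hε1 sstar
    set L : ℝ := -Real.log ε with hLdef
    have hL : 0 ≤ L := by
      have := Real.log_nonpos hε.le hε1
      simp only [hLdef]; linarith
    set b : ℝ := Real.exp (sstar / 2) with hbdef
    have hcA : Continuous fun s : ℝ =>
        Real.exp (σ₁ * s) * (1 + |Real.exp (s / 2) - b|) ^ (-σ₂) := by
      apply Continuous.mul (by continuity)
      apply Continuous.rpow_const (by continuity)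
      intro x; left; positivity
    have mA : Measurable fun s : ℝ =>
        ENNReal.ofReal (Real.exp (σ₁ * s) * (1 + |Real.exp (s / 2) - b|) ^ (-σ₂)) :=
      hcA.measurable.ennreal_ofReal
    calc (∫⁻ s in Set.Ioi L,
            ENNReal.ofReal (Real.exp (σ₁ * s) *
              ((1 + |Real.exp (s / 2) - b|) ^ (-σ₂) + (1 + Real.exp (s / 2)) ^ (-σ₂))))
        = ∫⁻ s in Set.Ioi L,
            (ENNReal.ofReal (Real.exp (σ₁ * s) * (1 + |Real.exp (s / 2) - b|) ^ (-σ₂)) +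
              ENNReal.ofReal (Real.exp (σ₁ * s) * (1 + Real.exp (s / 2)) ^ (-σ₂))) := by
          refine lintegral_congr fun s => ?_
          rw [mul_add]
          refine ENNReal.ofReal_add ?_ ?_
          · have h0 : (0:ℝ) < 1 + |Real.exp (s / 2) - b| := by positivity
            positivity
          · have h0 : (0:ℝ) < 1 + Real.exp (s / 2) := by positivity
            positivity
      _ = (∫⁻ s in Set.Ioi L,
            ENNReal.ofReal (Real.exp (σ₁ * s) * (1 + |Real.exp (s / 2) - b|) ^ (-σ₂))) +
          ∫⁻ s in Set.Ioi L,
            ENNReal.ofReal (Real.exp (σ₁ * s) * (1 + Real.exp (s / 2)) ^ (-σ₂)) :=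
          lintegral_add_left mA _
      _ ≤ ENNReal.ofReal (2 * EscapeAux.Bconst σ₁ σ₂) +
            ENNReal.ofReal (2 * EscapeAux.Bconst σ₁ σ₂) := by
          refine add_le_add (EscapeAux.cov h1 h2 h3 b L hL) ?_
          have := EscapeAux.cov h1 h2 h3 0 L hL
          simpa only [sub_zero, Real.abs_exp] using this
      _ = ENNReal.ofReal (4 * EscapeAux.Bconst σ₁ σ₂) := by
          rw [← ENNReal.ofReal_add (by linarith) (by linarith)]
          congr 1
          ring
  · intro a _
    exact (EscapeAux.key h1 h2 h3 a).trans
      (ENNReal.ofReal_le_ofReal (by linarith))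
end
end
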